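/- Let H_i be Hilbert spaces indexed by points of a finite set P ⊆ [0,1], and let S, T be families of bounded operators S_{p,q}, T_{p,q} : H_p → H_q for p < q in P, with ‖T_{p,q}‖ ≤ 1 for all p < q, S satisfying the composition property (S_{q,r} ∘ S_{p,q} = S_{p,r}), and ‖S_{p,q} - T_{p,q}‖ ≤ F(q - p) for consecutive points p, q of P, where F : ℝ≥0 → ℝ≥0. Then for any p < q in P with intermediate consecutive points p = q_1 < ⋯ < q_m = q, ‖S_{p,q} - T_{q_{m-1},q_m} ∘ ⋯ ∘ T_{q_1,q_2}‖ ≤ exp(Σ_{i=1}^{m-1} F(q_{i+1} - q_i)) - 1. -/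

import Mathlib

/-- Composition of the operators between consecutive indices. -/
def opChain9 {H : ℕ → Type*} [∀ i, NormedAddCommGroup (H i)]
    [∀ i, InnerProductSpace ℝ (H i)]
    (T : ∀ i j : ℕ, H i →L[ℝ] H j) (i : ℕ) : ∀ k : ℕ, H i →L[ℝ] H (i + k)
  | 0 => ContinuousLinearMap.id ℝ (H i)
  | (k + 1) => (T (i + k) (i + k + 1)).comp (opChain9 T i k)

/-- a composition-closed family `S` that `F`-approximates `T` on consecutive
points `q i < q (i+1)` lies within `exp (Σ F (Δq)) - 1` of the homogenization of `T`. -/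
theorem stmt9 {H : ℕ → Type*} [∀ i, NormedAddCommGroup (H i)]
    [∀ i, InnerProductSpace ℝ (H i)] [∀ i, CompleteSpace (H i)]
    (q : ℕ → ℝ) (hq : StrictMono q)
    (hq01 : ∀ i, q i ∈ Set.Icc (0 : ℝ) 1)
    (S T : ∀ i j : ℕ, H i →L[ℝ] H j) (F : ℝ → ℝ) (hF : ∀ t, 0 ≤ F t)
    (hT : ∀ i j : ℕ, i < j → ‖T i j‖ ≤ 1)
    (hScomp : ∀ i j k : ℕ, i < j → j < k → (S j k).comp (S i j) = S i k)
    (hST : ∀ i : ℕ, ‖S i (i + 1) - T i (i + 1)‖ ≤ F (q (i + 1) - q i)) :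
    ∀ i m : ℕ, 1 ≤ m →
      ‖S i (i + m) - opChain9 T i m‖
        ≤ Real.exp (∑ j ∈ Finset.range m, F (q (i + j + 1) - q (i + j))) - 1 := by
  intro i m hm
  have hchain : ∀ k : ℕ, ‖opChain9 T i k‖ ≤ 1 := by
    intro k
    induction k with
    | zero => simpa [opChain9] using ContinuousLinearMap.norm_id_le (𝕜 := ℝ) (E := H i)
    | succ k ih =>
      calc ‖opChain9 T i (k+1)‖ ≤ ‖T (i+k) (i+k+1)‖ * ‖opChain9 T i k‖ :=
            ContinuousLinearMap.opNorm_comp_le _ _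
        _ ≤ 1 * 1 := by
            have := hT (i+k) (i+k+1) (by omega)
            exact mul_le_mul this ih (norm_nonneg _) zero_le_one
        _ = 1 := by ring
  have key : ‖S i (i + m) - opChain9 T i m‖
      ≤ (∏ j ∈ Finset.range m, (1 + F (q (i + j + 1) - q (i + j)))) - 1 := by
    induction m, hm using Nat.le_induction with
    | base =>
      simp only [opChain9, Finset.prod_range_one, ContinuousLinearMap.comp_id]
      have := hST i
      simpa using this.trans_eq (by ring)
    | succ m hm ih =>
      have hP1 : (1:ℝ) ≤ ∏ j ∈ Finset.range m, (1 + F (q (i + j + 1) - q (i + j))) :=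
        by
          have := Finset.prod_le_prod (s := Finset.range m) (f := fun _ => (1:ℝ))
            (g := fun j => 1 + F (q (i + j + 1) - q (i + j)))
            (fun j _ => zero_le_one)
            (fun j _ => by linarith [hF (q (i + j + 1) - q (i + j))])
          simpa using this
      set A := S i (i + m)
      set C := opChain9 T i m
      set S' := S (i+m) (i+m+1)
      set T' := T (i+m) (i+m+1)
      have hA : ‖A‖ ≤ ∏ j ∈ Finset.range m, (1 + F (q (i + j + 1) - q (i + j))) := by
        calc ‖A‖ ≤ ‖A - C‖ + ‖C‖ := by
              simpa using norm_add_le (A - C) C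
          _ ≤ (∏ j ∈ Finset.range m, (1 + F (q (i + j + 1) - q (i + j))) - 1) + 1 :=
              add_le_add ih (hchain m)
          _ = _ := by ring
      have hcompS : S i (i + (m+1)) = S'.comp A := (hScomp i (i+m) (i+m+1) (by omega) (by omega)).symm
      have hsplit : S i (i + (m+1)) - opChain9 T i (m+1)
          = (S' - T').comp A + T'.comp (A - C) := by
        rw [hcompS]
        show S'.comp A - T'.comp C = (S' - T').comp A + T'.comp (A - C)
        rw [ContinuousLinearMap.sub_comp, ContinuousLinearMap.comp_sub]
        abel
      have hF' : ‖S' - T'‖ ≤ F (q (i + m + 1) - q (i + m)) := hST (i + m)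
      have hT' : ‖T'‖ ≤ 1 := hT _ _ (by omega)
      calc ‖S i (i + (m+1)) - opChain9 T i (m+1)‖
          ≤ ‖(S' - T').comp A‖ + ‖T'.comp (A - C)‖ := by rw [hsplit]; exact norm_add_le _ _
        _ ≤ ‖S' - T'‖ * ‖A‖ + ‖T'‖ * ‖A - C‖ :=
            add_le_add (ContinuousLinearMap.opNorm_comp_le _ _) (ContinuousLinearMap.opNorm_comp_le _ _)
        _ ≤ F (q (i + m + 1) - q (i + m)) * (∏ j ∈ Finset.range m, (1 + F (q (i + j + 1) - q (i + j))))
            + 1 * ((∏ j ∈ Finset.range m, (1 + F (q (i + j + 1) - q (i + j)))) - 1) := by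
            have h1 : ‖S' - T'‖ * ‖A‖ ≤ F (q (i + m + 1) - q (i + m)) * (∏ j ∈ Finset.range m, (1 + F (q (i + j + 1) - q (i + j)))) :=
              mul_le_mul hF' hA (norm_nonneg _) (hF _)
            have h2 : ‖T'‖ * ‖A - C‖ ≤ 1 * ((∏ j ∈ Finset.range m, (1 + F (q (i + j + 1) - q (i + j)))) - 1) :=
              mul_le_mul hT' ih (norm_nonneg _) zero_le_one
            exact add_le_add h1 h2
        _ = (∏ j ∈ Finset.range (m+1), (1 + F (q (i + j + 1) - q (i + j)))) - 1 := by
            rw [Finset.prod_range_succ]; ring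
  refine key.trans (sub_le_sub_right ?_ 1)
  calc (∏ j ∈ Finset.range m, (1 + F (q (i + j + 1) - q (i + j))))
      ≤ ∏ j ∈ Finset.range m, Real.exp (F (q (i + j + 1) - q (i + j))) :=
        Finset.prod_le_prod (fun j _ => by linarith [hF (q (i + j + 1) - q (i + j))])
          (fun j _ => by linarith [Real.add_one_le_exp (F (q (i + j + 1) - q (i + j)))])
    _ = Real.exp (∑ j ∈ Finset.range m, F (q (i + j + 1) - q (i + j))) :=
        (Real.exp_sum _ _).symm
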